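/- With the unfolding A_0, B_1, A_1, B_2, … of a finite connected poset P from x_0 ∈ Min(P) ∪ Max(P): if an element x lies in the upset of A_i for some i ≥ 1, then x lies in the downset of B_i or of B_{i+1}, but in no downset of B_j with j ∉ {i, i+1}; if x lies in the upset of A_0, then x lies only in the downset of B_1. Dually, if x lies in the downset of B_i (i ≥ 1), then x lies in the upset of A_{i−1} or of A_i, but in no upset of A_j with j ∉ {i−1, i}. -/

import Mathlib

section Defs
variable (α : Type*) [PartialOrder α]

/-- `L` is a linear extension of the partial order on `α`. -/
def IsLinExt (L : LinearOrder α) : Prop := ∀ x y : α, x ≤ y → L.le x y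

/-- The poset `α` is the intersection of `d` linear extensions. -/
def HasRealizer (d : ℕ) : Prop :=
  ∃ Ls : Fin d → LinearOrder α, (∀ i, IsLinExt α (Ls i)) ∧
    ∀ x y : α, (∀ i, (Ls i).le x y) → x ≤ y

/-- The order dimension of the poset `α`. -/
noncomputable def pdim : ℕ := sInf {d | HasRealizer α d}

/-- `x` and `y` are incomparable. -/
def IncompP (x y : α) : Prop := ¬ x ≤ y ∧ ¬ y ≤ x

/-- A set of (incomparable) pairs is reversible if some linear extension reverses all pairs. -/
def ReversibleSet (I : Set (α × α)) : Prop :=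
  ∃ L : LinearOrder α, IsLinExt α L ∧ ∀ p ∈ I, L.lt p.2 p.1

/-- `I` can be partitioned into `d` reversible sets. -/
def RevPart (I : Set (α × α)) (d : ℕ) : Prop :=
  ∃ J : Fin d → Set (α × α), (⋃ i, J i) = I ∧
    (∀ i j, i ≠ j → Disjoint (J i) (J j)) ∧ ∀ i, ReversibleSet α (J i)

/-- The least number of reversible sets partitioning `I` (with `revDim ∅ = 1`). -/
noncomputable def revDim (I : Set (α × α)) : ℕ := sInf {d | 0 < d ∧ RevPart α I d}

/-- Incomparable pairs `(a,b)` with `a ∈ A` and `b ∈ B`. -/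
def IncPairs (A B : Set α) : Set (α × α) := {p | p.1 ∈ A ∧ p.2 ∈ B ∧ IncompP α p.1 p.2}

noncomputable def dimAB (A B : Set α) : ℕ := revDim α (IncPairs α A B)

/-- The minimal elements of `α`. -/
def minimalSet : Set α := {x | ∀ y : α, y ≤ x → y = x}

/-- The maximal elements of `α`. -/
def maximalSet : Set α := {x | ∀ y : α, x ≤ y → y = x}

end Defs

section Unfold
variable (α : Type*) [PartialOrder α]

/-- The upset of a set. -/
def UpS (S : Set α) : Set α := {x | ∃ s ∈ S, s ≤ x}

/-- The downset of a set. -/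
def DnS (S : Set α) : Set α := {x | ∃ s ∈ S, x ≤ s}

/-- The poset `α` is connected (w.r.t. its comparability/cover graph). -/
def PosetConnected : Prop :=
  ∀ x y : α, Relation.ReflTransGen (fun u v : α => u ≤ v ∨ v ≤ u) x y

/-- Auxiliary recursion for the unfolding of `α` from starting sets `A0, B1`:
`unfoldAux A0 B1 i = ((A_i, B_{i+1}), (A_0 ∪ ⋯ ∪ A_i, B_1 ∪ ⋯ ∪ B_{i+1}))`. -/
def unfoldAux (A0 B1 : Set α) : ℕ → (Set α × Set α) × (Set α × Set α)
  | 0 => ((A0, B1), (A0, B1))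
  | i + 1 =>
    let p := unfoldAux A0 B1 i
    let Ai : Set α := {a | a ∈ minimalSet α ∧ a ∉ p.2.1 ∧ ∃ b ∈ p.1.2, a ≤ b}
    let Bi : Set α := {b | b ∈ maximalSet α ∧ b ∉ p.2.2 ∧ ∃ a ∈ Ai, a ≤ b}
    ((Ai, Bi), (p.2.1 ∪ Ai, p.2.2 ∪ Bi))

/-- The set `A_i` of the unfolding. -/
def uA (A0 B1 : Set α) (i : ℕ) : Set α := (unfoldAux α A0 B1 i).1.1

/-- The set `B_j` (for `j ≥ 1`) of the unfolding; `uB 0 = ∅` by convention. -/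
def uB (A0 B1 : Set α) : ℕ → Set α
  | 0 => ∅
  | i + 1 => (unfoldAux α A0 B1 i).1.2

/-- The starting data of the unfolding of `α` from `x0 ∈ Min(α) ∪ Max(α)`. -/
def UnfoldStart (x0 : α) (A0 B1 : Set α) : Prop :=
  (x0 ∈ minimalSet α ∧ A0 = {x0} ∧ B1 = {b | b ∈ maximalSet α ∧ x0 ≤ b}) ∨
  (x0 ∈ maximalSet α ∧ A0 = (∅ : Set α) ∧ B1 = {x0})

/-- `α(x)`: the least `i` with `x ∈ Up(A_i)`. -/
noncomputable def alphaF (A0 B1 : Set α) (x : α) : ℕ :=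
  sInf {i | x ∈ UpS α (uA α A0 B1 i)}

/-- `β(x)`: the least `j ≥ 1` with `x ∈ D(B_j)`. -/
noncomputable def betaF (A0 B1 : Set α) (x : α) : ℕ :=
  sInf {j | 1 ≤ j ∧ x ∈ DnS α (uB α A0 B1 j)}

/-- `y` is a valid parent of `x` in the unfolding. -/
def IsParentOf (A0 B1 : Set α) (x y : α) : Prop :=
  (betaF α A0 B1 x = alphaF α A0 B1 x ∧ x ⋖ y ∧
      ∃ b ∈ uB α A0 B1 (betaF α A0 B1 x), y ≤ b) ∨
  (betaF α A0 B1 x = alphaF α A0 B1 x + 1 ∧ y ⋖ x ∧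
      ∃ a ∈ uA α A0 B1 (alphaF α A0 B1 x), a ≤ y)

end Unfold


section Aux
variable {α : Type*} [PartialOrder α] (A0 B1 : Set α)

lemma uA_succ' (m : ℕ) : uA α A0 B1 (m+1) =
    {a | a ∈ minimalSet α ∧ a ∉ (unfoldAux α A0 B1 m).2.1 ∧ ∃ b ∈ uB α A0 B1 (m+1), a ≤ b} := rfl

lemma uB_succ2' (m : ℕ) : uB α A0 B1 (m+2) =
    {b | b ∈ maximalSet α ∧ b ∉ (unfoldAux α A0 B1 m).2.2 ∧ ∃ a ∈ uA α A0 B1 (m+1), a ≤ b} := rfl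

lemma snd1_succ' (m : ℕ) : (unfoldAux α A0 B1 (m+1)).2.1 =
    (unfoldAux α A0 B1 m).2.1 ∪ uA α A0 B1 (m+1) := rfl

lemma snd2_succ' (m : ℕ) : (unfoldAux α A0 B1 (m+1)).2.2 =
    (unfoldAux α A0 B1 m).2.2 ∪ uB α A0 B1 (m+2) := rfl

lemma acc1 (m : ℕ) (a : α) :
    a ∈ (unfoldAux α A0 B1 m).2.1 ↔ ∃ k, k ≤ m ∧ a ∈ uA α A0 B1 k := by
  induction m with
  | zero =>
    constructor
    · intro h; exact ⟨0, le_refl 0, h⟩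
    · rintro ⟨k, hk, hm⟩; interval_cases k; exact hm
  | succ m ih =>
    rw [snd1_succ']
    constructor
    · rintro (h | h)
      · obtain ⟨k, hk, hm⟩ := (ih).mp h; exact ⟨k, by omega, hm⟩
      · exact ⟨m+1, le_refl _, h⟩
    · rintro ⟨k, hk, hm⟩
      rcases Nat.lt_or_ge k (m+1) with h | h
      · exact Or.inl (ih.mpr ⟨k, by omega, hm⟩)
      · have : k = m + 1 := by omega
        subst this; exact Or.inr hm

lemma acc2 (m : ℕ) (b : α) :
    b ∈ (unfoldAux α A0 B1 m).2.2 ↔ ∃ k, 1 ≤ k ∧ k ≤ m + 1 ∧ b ∈ uB α A0 B1 k := by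
  induction m with
  | zero =>
    constructor
    · intro h; exact ⟨1, le_refl 1, le_refl 1, h⟩
    · rintro ⟨k, h1, hk, hm⟩; interval_cases k; exact hm
  | succ m ih =>
    rw [snd2_succ']
    constructor
    · rintro (h | h)
      · obtain ⟨k, h1, hk, hm⟩ := ih.mp h; exact ⟨k, h1, by omega, hm⟩
      · exact ⟨m+2, by omega, le_refl _, h⟩
    · rintro ⟨k, h1, hk, hm⟩
      rcases Nat.lt_or_ge k (m+2) with h | h
      · exact Or.inl (ih.mpr ⟨k, h1, by omega, hm⟩)
      · have : k = m + 2 := by omega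
        subst this; exact Or.inr hm

variable (x0 : α) (hstart : UnfoldStart α x0 A0 B1)

lemma uA_disj (i j : ℕ) (a : α) (hi : a ∈ uA α A0 B1 i) (hj : a ∈ uA α A0 B1 j) : i = j := by
  have aux : ∀ i j : ℕ, i < j → a ∈ uA α A0 B1 i → a ∈ uA α A0 B1 j → False := by
    intro i j hlt hi hj
    obtain ⟨m, rfl⟩ : ∃ m, j = m + 1 := ⟨j - 1, by omega⟩
    rw [uA_succ'] at hj
    exact hj.2.1 ((acc1 A0 B1 m a).mpr ⟨i, by omega, hi⟩)
  rcases lt_trichotomy i j with h | h | h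
  · exact absurd (aux i j h hi hj) not_false
  · exact h
  · exact absurd (aux j i h hj hi) not_false

lemma uB_disj (i j : ℕ) (b : α) (h1 : 1 ≤ i) (hi : b ∈ uB α A0 B1 i) (hj : b ∈ uB α A0 B1 j) :
    i = j := by
  have h1j : 1 ≤ j := by
    rcases Nat.eq_zero_or_pos j with h | h
    · subst h; exact absurd hj (by simp [uB])
    · exact h
  have aux : ∀ i j : ℕ, 1 ≤ i → i < j → b ∈ uB α A0 B1 i → b ∈ uB α A0 B1 j → False := by
    intro i j hi1 hlt hi hj
    obtain ⟨m, rfl⟩ : ∃ m, j = m + 2 := ⟨j - 2, by omega⟩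
    rw [uB_succ2'] at hj
    exact hj.2.1 ((acc2 A0 B1 m b).mpr ⟨i, hi1, by omega, hi⟩)
  rcases lt_trichotomy i j with h | h | h
  · exact absurd (aux i j h1 h hi hj) not_false
  · exact h
  · exact absurd (aux j i h1j h hj hi) not_false

include hstart

lemma uA_min {i : ℕ} {a : α} (h : a ∈ uA α A0 B1 i) : a ∈ minimalSet α := by
  cases i with
  | zero =>
    rcases hstart with ⟨hx, hA, hB⟩ | ⟨hx, hA, hB⟩ <;> subst hA <;> subst hB
    · have : a ∈ ({x0} : Set α) := h
      rw [Set.mem_singleton_iff] at this; subst this; exact hx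
    · exact absurd (show a ∈ (∅ : Set α) from h) (Set.notMem_empty a)
  | succ m => exact ((uA_succ' A0 B1 m) ▸ h).1

lemma uB_max {j : ℕ} {b : α} (h1 : 1 ≤ j) (h : b ∈ uB α A0 B1 j) : b ∈ maximalSet α := by
  match j, h1 with
  | 1, _ =>
    rcases hstart with ⟨hx, hA, hB⟩ | ⟨hx, hA, hB⟩ <;> subst hA <;> subst hB
    · exact (show b ∈ {b | b ∈ maximalSet α ∧ x0 ≤ b} from h).1
    · have : b ∈ ({x0} : Set α) := h
      rw [Set.mem_singleton_iff] at this; subst this; exact hx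
  | (m+2), _ => exact ((uB_succ2' A0 B1 m) ▸ h).1

omit hstart in
/-- A minimal element below an element of `B_{m+1}` lies in some `A_k`, `k ≤ m+1`. -/
lemma min_le_B {m : ℕ} {a b : α} (hamin : a ∈ minimalSet α) (hb : b ∈ uB α A0 B1 (m+1))
    (hab : a ≤ b) : ∃ k, k ≤ m + 1 ∧ a ∈ uA α A0 B1 k := by
  by_cases h : a ∈ (unfoldAux α A0 B1 m).2.1
  · obtain ⟨k, hk, hm⟩ := (acc1 A0 B1 m a).mp h
    exact ⟨k, by omega, hm⟩
  · exact ⟨m+1, le_refl _, (uA_succ' A0 B1 m) ▸ ⟨hamin, h, b, hb, hab⟩⟩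

/-- A maximal element above an element of `A_i` lies in some `B_k`, `1 ≤ k ≤ i+1`. -/
lemma A_le_max {i : ℕ} {a b : α} (hbmax : b ∈ maximalSet α) (ha : a ∈ uA α A0 B1 i)
    (hab : a ≤ b) : ∃ k, 1 ≤ k ∧ k ≤ i + 1 ∧ b ∈ uB α A0 B1 k := by
  cases i with
  | zero =>
    rcases hstart with ⟨hx, hA, hB⟩ | ⟨hx, hA, hB⟩ <;> subst hA <;> subst hB
    · have : a ∈ ({x0} : Set α) := ha
      rw [Set.mem_singleton_iff] at this; subst this
      exact ⟨1, le_refl 1, le_refl 1,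
        show b ∈ {b | b ∈ maximalSet α ∧ a ≤ b} from ⟨hbmax, hab⟩⟩
    · exact absurd (show a ∈ (∅ : Set α) from ha) (Set.notMem_empty a)
  | succ m =>
    by_cases h : b ∈ (unfoldAux α A0 B1 m).2.2
    · obtain ⟨k, h1, hk, hm⟩ := (acc2 A0 B1 m b).mp h
      exact ⟨k, h1, by omega, hm⟩
    · exact ⟨m+2, by omega, le_refl _, (uB_succ2' A0 B1 m) ▸ ⟨hbmax, h, a, ha, hab⟩⟩

/-- Core sandwich lemma. -/
lemma core {i j : ℕ} {a b : α} (hj : 1 ≤ j) (ha : a ∈ uA α A0 B1 i) (hb : b ∈ uB α A0 B1 j)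
    (hab : a ≤ b) : i ≤ j ∧ j ≤ i + 1 := by
  obtain ⟨m, rfl⟩ : ∃ m, j = m + 1 := ⟨j - 1, by omega⟩
  obtain ⟨k, hk, hak⟩ := min_le_B A0 B1 (uA_min A0 B1 x0 hstart ha) hb hab
  have hki : k = i := uA_disj A0 B1 k i a hak ha
  obtain ⟨k', h1', hk', hbk'⟩ := A_le_max A0 B1 x0 hstart (uB_max A0 B1 x0 hstart hj hb) ha hab
  have : k' = m + 1 := uB_disj A0 B1 k' (m+1) b h1' hbk' hb
  omega

end Aux

/-- membership properties of upsets/downsets of the unfolding classes. -/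
theorem stmt10 {α : Type*} [Fintype α] [PartialOrder α] [Nontrivial α]
    (hconn : PosetConnected α)
    (x0 : α) (A0 B1 : Set α) (hstart : UnfoldStart α x0 A0 B1) (x : α) :
    (∀ i : ℕ, 1 ≤ i → x ∈ UpS α (uA α A0 B1 i) →
      ((x ∈ DnS α (uB α A0 B1 i) ∨ x ∈ DnS α (uB α A0 B1 (i + 1))) ∧
        ∀ j : ℕ, 1 ≤ j → x ∈ DnS α (uB α A0 B1 j) → j = i ∨ j = i + 1)) ∧
    (x ∈ UpS α (uA α A0 B1 0) →
      (x ∈ DnS α (uB α A0 B1 1) ∧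
        ∀ j : ℕ, 1 ≤ j → x ∈ DnS α (uB α A0 B1 j) → j = 1)) ∧
    (∀ i : ℕ, 1 ≤ i → x ∈ DnS α (uB α A0 B1 i) →
      ((x ∈ UpS α (uA α A0 B1 (i - 1)) ∨ x ∈ UpS α (uA α A0 B1 i)) ∧
        ∀ j : ℕ, x ∈ UpS α (uA α A0 B1 j) → j = i - 1 ∨ j = i)) := by
  have hmaxex : ∀ y : α, ∃ b, y ≤ b ∧ b ∈ maximalSet α := by
    intro y
    obtain ⟨b, hb, hmax⟩ := Finset.exists_le_maximal Finset.univ (Finset.mem_univ y)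
    exact ⟨b, hb, fun z hz => le_antisymm (hmax.2 (Finset.mem_univ z) hz) hz⟩
  have hminex : ∀ y : α, ∃ a, a ≤ y ∧ a ∈ minimalSet α := by
    intro y
    obtain ⟨a, ha, hmin⟩ := Finset.exists_le_minimal Finset.univ (Finset.mem_univ y)
    exact ⟨a, ha, fun z hz => le_antisymm hz (hmin.2 (Finset.mem_univ z) hz)⟩
  refine ⟨?_, ?_, ?_⟩
  · rintro i hi ⟨a, haA, hax⟩
    constructor
    · obtain ⟨b, hxb, hbmax⟩ := hmaxex x
      obtain ⟨k, hk1, hk2, hbk⟩ := A_le_max A0 B1 x0 hstart hbmax haA (hax.trans hxb)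
      have hik := core A0 B1 x0 hstart hk1 haA hbk (hax.trans hxb)
      rcases (by omega : k = i ∨ k = i + 1) with rfl | rfl
      · exact Or.inl ⟨b, hbk, hxb⟩
      · exact Or.inr ⟨b, hbk, hxb⟩
    · rintro j hj ⟨b', hb', hxb'⟩
      have := core A0 B1 x0 hstart hj haA hb' (hax.trans hxb')
      omega
  · rintro ⟨a, haA, hax⟩
    constructor
    · obtain ⟨b, hxb, hbmax⟩ := hmaxex x
      obtain ⟨k, hk1, hk2, hbk⟩ := A_le_max A0 B1 x0 hstart hbmax haA (hax.trans hxb)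
      have : k = 1 := by omega
      subst this
      exact ⟨b, hbk, hxb⟩
    · rintro j hj ⟨b', hb', hxb'⟩
      have := core A0 B1 x0 hstart hj haA hb' (hax.trans hxb')
      omega
  · rintro i hi ⟨b, hbB, hxb⟩
    constructor
    · obtain ⟨a, hax, hamin⟩ := hminex x
      obtain ⟨m, rfl⟩ : ∃ m, i = m + 1 := ⟨i - 1, by omega⟩
      obtain ⟨k, hk, hak⟩ := min_le_B A0 B1 hamin hbB (hax.trans hxb)
      have := core A0 B1 x0 hstart hi hak hbB (hax.trans hxb)
      rcases (by omega : k = m ∨ k = m + 1) with rfl | rfl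
      · exact Or.inl ⟨a, by simpa using hak, hax⟩
      · exact Or.inr ⟨a, hak, hax⟩
    · rintro j ⟨a', ha', ha'x⟩
      have := core A0 B1 x0 hstart hi ha' hbB (ha'x.trans hxb)
      omega
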